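/- Incompatibility of same and distinct information in capacity achieving ULDCs (Lemma 3, Property 3): let N ≥ 2, K ≥ 1, and consider a universal locally decodable code (ULDC) with locality N, K source symbols of entropy L_w > 0, M coded symbols of entropy L_x, and symbol rate L_w/L_x = C*(N,K). Then there do not exist indices i₁, i₂ ∈ {1,…,M} and k ∈ {1,…,K} such that simultaneously H(X_{i₁} | X_{i₂}, W_k̄) = H(X_{i₂} | X_{i₁}, W_k̄) = 0 (same information about W_k) and H(X_{i₁} | X_{i₂}, W_k̄) = H(X_{i₁} | W_k̄) (distinct information about W_k), where W_k̄ is the tuple of all source symbols other than W_k. -/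

import Mathlib

open scoped BigOperators

noncomputable section

/-- A finite probability space: a finite type together with a probability mass function. -/
structure FinProbSpace where
  Ω : Type
  [fin : Fintype Ω]
  p : Ω → ℝ
  nonneg : ∀ ω, 0 ≤ p ω
  sum_one : ∑ ω, p ω = 1

attribute [instance] FinProbSpace.fin

namespace FinProbSpace

variable (P : FinProbSpace)

/-- Probability that the random variable `X` takes the value `a`. -/
def prob {α : Type} [DecidableEq α] (X : P.Ω → α) (a : α) : ℝ :=
  ∑ ω, if X ω = a then P.p ω else 0

/-- Shannon entropy (in bits) of a finitely valued random variable. -/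
def H {α : Type} [Fintype α] [DecidableEq α] (X : P.Ω → α) : ℝ :=
  ∑ a, -(P.prob X a * Real.logb 2 (P.prob X a))

/-- Conditional Shannon entropy `H(X | Y) = H(X, Y) - H(Y)` (in bits). -/
def condH {α β : Type} [Fintype α] [DecidableEq α] [Fintype β] [DecidableEq β]
    (X : P.Ω → α) (Y : P.Ω → β) : ℝ :=
  P.H (fun ω => (X ω, Y ω)) - P.H Y

/-- The tuple random variable `(X_i)_{i ∈ ι}`. -/
def tuple {ι V : Type} (X : ι → P.Ω → V) : P.Ω → ι → V := fun ω i => X i ω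

/-- Joint (mutual) independence of a finite family of random variables. -/
def iIndep {ι V : Type} [Fintype ι] [DecidableEq ι] [DecidableEq V] (X : ι → P.Ω → V) : Prop :=
  ∀ a : ι → V, P.prob (P.tuple X) a = ∏ i, P.prob (X i) (a i)

/-- `X` and `Y` contain the same information about everything beyond `Z`:
`H(X | Y, Z) = H(Y | X, Z) = 0`. -/
def sameInfo {α β γ : Type} [Fintype α] [DecidableEq α] [Fintype β] [DecidableEq β]
    [Fintype γ] [DecidableEq γ] (X : P.Ω → α) (Y : P.Ω → β) (Z : P.Ω → γ) : Prop :=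
  P.condH X (fun ω => (Y ω, Z ω)) = 0 ∧ P.condH Y (fun ω => (X ω, Z ω)) = 0

end FinProbSpace

namespace FinProbSpace

variable {P : FinProbSpace}

lemma prob_nonneg {α : Type} [DecidableEq α] (X : P.Ω → α) (a : α) : 0 ≤ P.prob X a :=
  Finset.sum_nonneg fun ω _ => by split; exacts [P.nonneg ω, le_rfl]

lemma sum_prob {α : Type} [Fintype α] [DecidableEq α] (X : P.Ω → α) :
    ∑ a, P.prob X a = 1 := by
  unfold prob
  rw [Finset.sum_comm]
  simpa using P.sum_one

lemma prob_le_one {α : Type} [Fintype α] [DecidableEq α] (X : P.Ω → α) (a : α) :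
    P.prob X a ≤ 1 := by
  rw [← sum_prob X]
  exact Finset.single_le_sum (fun b _ => prob_nonneg X b) (Finset.mem_univ a)

lemma le_prob {α : Type} [DecidableEq α] (X : P.Ω → α) (ω : P.Ω) :
    P.p ω ≤ P.prob X (X ω) := by
  have := Finset.single_le_sum (f := fun ω' => if X ω' = X ω then P.p ω' else 0)
    (fun ω' _ => by split; exacts [P.nonneg ω', le_rfl]) (Finset.mem_univ ω)
  simpa [prob] using this

lemma prob_le_prob {α β : Type} [DecidableEq α] [DecidableEq β]
    {X : P.Ω → α} {Y : P.Ω → β} {ω : P.Ω}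
    (h : ∀ ω', X ω' = X ω → Y ω' = Y ω) :
    P.prob X (X ω) ≤ P.prob Y (Y ω) := by
  refine Finset.sum_le_sum fun ω' _ => ?_
  by_cases hx : X ω' = X ω
  · simp [hx, h ω' hx]
  · rw [if_neg hx]; split; exacts [P.nonneg ω', le_rfl]

lemma prob_le_prob_comp {α β : Type} [DecidableEq α] [DecidableEq β]
    (X : P.Ω → α) (f : α → β) (a : α) :
    P.prob X a ≤ P.prob (fun ω => f (X ω)) (f a) := by
  refine Finset.sum_le_sum fun ω' _ => ?_
  by_cases hx : X ω' = a
  · simp [hx]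
  · rw [if_neg hx]; split; exacts [P.nonneg ω', le_rfl]

lemma sum_p_mul {α : Type} [Fintype α] [DecidableEq α] (X : P.Ω → α) (g : α → ℝ) :
    ∑ ω, P.p ω * g (X ω) = ∑ a, P.prob X a * g a := by
  unfold prob
  have h1 : ∀ a, (∑ ω, if X ω = a then P.p ω else 0) * g a
      = ∑ ω, if X ω = a then P.p ω * g a else 0 := fun a => by
    rw [Finset.sum_mul]
    exact Finset.sum_congr rfl fun ω _ => by split <;> simp
  simp_rw [h1]
  rw [Finset.sum_comm]
  exact Finset.sum_congr rfl fun ω _ => by simp [Finset.sum_ite_eq]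

lemma H_eq {α : Type} [Fintype α] [DecidableEq α] (X : P.Ω → α) :
    P.H X = ∑ ω, -(P.p ω * Real.logb 2 (P.prob X (X ω))) := by
  have := sum_p_mul (P := P) X (fun a => -(Real.logb 2 (P.prob X a)))
  simp only [mul_neg] at this
  unfold H
  exact this.symm

lemma H_mono {α β : Type} [Fintype α] [DecidableEq α] [Fintype β] [DecidableEq β]
    {X : P.Ω → α} {Y : P.Ω → β}
    (h : ∀ ω ω', X ω = X ω' → Y ω = Y ω') : P.H Y ≤ P.H X := by
  rw [H_eq, H_eq]
  refine Finset.sum_le_sum fun ω _ => ?_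
  rcases eq_or_lt_of_le (P.nonneg ω) with hp | hp
  · simp [← hp]
  · have h1 : 0 < P.prob X (X ω) := lt_of_lt_of_le hp (le_prob X ω)
    have h2 : P.prob X (X ω) ≤ P.prob Y (Y ω) :=
      prob_le_prob fun ω' hx => h ω' ω hx
    have := Real.logb_le_logb_of_le (b := 2) one_lt_two h1 h2
    nlinarith [this, hp.le]

lemma H_congr {α β : Type} [Fintype α] [DecidableEq α] [Fintype β] [DecidableEq β]
    {X : P.Ω → α} {Y : P.Ω → β}
    (h : ∀ ω ω', X ω = X ω' ↔ Y ω = Y ω') : P.H X = P.H Y :=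
  le_antisymm (H_mono fun ω ω' hy => ((h ω ω').mpr hy ▸ rfl))
    (H_mono fun ω ω' hx => (h ω ω').mp hx)

lemma H_nonneg {α : Type} [Fintype α] [DecidableEq α] (X : P.Ω → α) : 0 ≤ P.H X := by
  rw [H_eq]
  refine Finset.sum_nonneg fun ω _ => ?_
  rcases eq_or_lt_of_le (P.nonneg ω) with hp | hp
  · simp [← hp]
  · have h1 : 0 < P.prob X (X ω) := lt_of_lt_of_le hp (le_prob X ω)
    have h2 := Real.logb_nonpos (b := 2) one_lt_two h1.le (prob_le_one X (X ω))
    nlinarith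

lemma prob_snd_marginal {α β : Type} [Fintype α] [DecidableEq α] [DecidableEq β]
    (X : P.Ω → α) (Y : P.Ω → β) (b : β) :
    ∑ a, P.prob (fun ω => (X ω, Y ω)) (a, b) = P.prob Y b := by
  unfold prob
  rw [Finset.sum_comm]
  refine Finset.sum_congr rfl fun ω _ => ?_
  simp [Prod.ext_iff, ite_and, Finset.sum_ite_eq]

lemma submod {α β γ : Type} [Fintype α] [DecidableEq α] [Fintype β] [DecidableEq β]
    [Fintype γ] [DecidableEq γ] (A : P.Ω → α) (B : P.Ω → β) (C : P.Ω → γ) :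
    P.H (fun ω => (A ω, (B ω, C ω))) + P.H C
      ≤ P.H (fun ω => (A ω, C ω)) + P.H (fun ω => (B ω, C ω)) := by
  have hl2 : (0:ℝ) < Real.log 2 := Real.log_pos one_lt_two
  set T : P.Ω → α × (β × γ) := fun ω => (A ω, (B ω, C ω)) with hT
  set pT : α × (β × γ) → ℝ := P.prob T with hpT
  set pAC : α × γ → ℝ := P.prob (fun ω => (A ω, C ω)) with hpAC
  set pBC : β × γ → ℝ := P.prob (fun ω => (B ω, C ω)) with hpBC
  set pC : γ → ℝ := P.prob C with hpC
  set G : α × (β × γ) → ℝ := fun v => pAC (v.1, v.2.2) * pBC v.2 / (pT v * pC v.2.2) with hG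
  -- Step A : ∑ v, pT v * G v ≤ 1
  have stepA : ∑ v, pT v * G v ≤ 1 := by
    have h1 : ∀ v : α × (β × γ), pT v * G v ≤
        (if pC v.2.2 = 0 then 0 else pAC (v.1, v.2.2) * pBC v.2 / pC v.2.2) := by
      intro v
      by_cases hv : pT v = 0
      · rw [hv, zero_mul]
        split
        · exact le_rfl
        · exact div_nonneg (mul_nonneg (prob_nonneg _ _) (prob_nonneg _ _)) (prob_nonneg _ _)
      · have hvpos : 0 < pT v := lt_of_le_of_ne (prob_nonneg _ _) (Ne.symm hv)
        have hCv : pT v ≤ pC v.2.2 := by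
          have := prob_le_prob_comp (P := P) T (fun v => v.2.2) v
          exact this
        have hCpos : 0 < pC v.2.2 := lt_of_lt_of_le hvpos hCv
        rw [if_neg (ne_of_gt hCpos)]
        have : pT v * G v = pAC (v.1, v.2.2) * pBC v.2 / pC v.2.2 := by
          rw [hG]
          dsimp only
          rw [← mul_div_assoc, mul_div_mul_left _ _ hv]
        rw [this]
    calc ∑ v, pT v * G v
        ≤ ∑ v : α × (β × γ), (if pC v.2.2 = 0 then 0 else pAC (v.1, v.2.2) * pBC v.2 / pC v.2.2) :=
          Finset.sum_le_sum fun v _ => h1 v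
      _ = ∑ a, ∑ b, ∑ c, (if pC c = 0 then 0 else pAC (a, c) * pBC (b, c) / pC c) := by
          rw [Fintype.sum_prod_type]
          exact Finset.sum_congr rfl fun a _ => Fintype.sum_prod_type _
      _ = ∑ a, ∑ c, ∑ b, (if pC c = 0 then 0 else pAC (a, c) * pBC (b, c) / pC c) :=
          Finset.sum_congr rfl fun a _ => Finset.sum_comm
      _ = ∑ c, ∑ a, ∑ b, (if pC c = 0 then 0 else pAC (a, c) * pBC (b, c) / pC c) :=
          Finset.sum_comm
      _ ≤ ∑ c, pC c := by
          refine Finset.sum_le_sum fun c _ => ?_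
          by_cases hc : pC c = 0
          · simp [hc]
          · have : ∀ a : α, ∑ b, pAC (a, c) * pBC (b, c) / pC c = pAC (a, c) * pC c / pC c := by
              intro a
              rw [← Finset.sum_div, ← Finset.mul_sum, prob_snd_marginal]
            simp_rw [if_neg hc, this]
            have h2 : ∀ a : α, pAC (a, c) * pC c / pC c = pAC (a, c) := fun a => by
              rw [mul_div_assoc, div_self hc, mul_one]
            simp_rw [h2]
            rw [prob_snd_marginal]
      _ = 1 := sum_prob C
  -- Step B : termwise entropy bound
  rw [← sub_nonpos]
  calc P.H T + P.H C - (P.H (fun ω => (A ω, C ω)) + P.H (fun ω => (B ω, C ω)))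
      = ∑ ω, ((-(P.p ω * Real.logb 2 (pT (T ω))) + -(P.p ω * Real.logb 2 (pC (C ω))))
          - (-(P.p ω * Real.logb 2 (P.prob (fun ω => (A ω, C ω)) ((fun ω => (A ω, C ω)) ω)))
            + -(P.p ω * Real.logb 2 (P.prob (fun ω => (B ω, C ω)) ((fun ω => (B ω, C ω)) ω))))) := by
        rw [H_eq T, H_eq C, H_eq (fun ω => (A ω, C ω)), H_eq (fun ω => (B ω, C ω)),
          ← Finset.sum_add_distrib, ← Finset.sum_add_distrib, ← Finset.sum_sub_distrib]
    _ ≤ ∑ ω, (P.p ω * G (T ω) - P.p ω) / Real.log 2 := by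
        refine Finset.sum_le_sum fun ω _ => ?_
        show (-(P.p ω * Real.logb 2 (pT (T ω))) + -(P.p ω * Real.logb 2 (pC (C ω))))
          - (-(P.p ω * Real.logb 2 (pAC (A ω, C ω))) + -(P.p ω * Real.logb 2 (pBC (B ω, C ω))))
          ≤ (P.p ω * G (T ω) - P.p ω) / Real.log 2
        rcases eq_or_lt_of_le (P.nonneg ω) with hp | hp
        · simp [← hp]
        · have h1 : 0 < pT (T ω) := lt_of_lt_of_le hp (le_prob T ω)
          have h2 : 0 < pC (C ω) := lt_of_lt_of_le hp (le_prob C ω)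
          have h3 : 0 < pAC (A ω, C ω) := lt_of_lt_of_le hp (le_prob (fun ω => (A ω, C ω)) ω)
          have h4 : 0 < pBC (B ω, C ω) := lt_of_lt_of_le hp (le_prob (fun ω => (B ω, C ω)) ω)
          have hGT : G (T ω) = pAC (A ω, C ω) * pBC (B ω, C ω) / (pT (T ω) * pC (C ω)) := rfl
          have hx : 0 < pAC (A ω, C ω) * pBC (B ω, C ω) / (pT (T ω) * pC (C ω)) := by positivity
          have hlog := Real.log_le_sub_one_of_pos hx
          rw [Real.log_div (by positivity) (by positivity), Real.log_mul h3.ne' h4.ne',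
            Real.log_mul h1.ne' h2.ne'] at hlog
          have hstep : Real.log (pAC (A ω, C ω)) + Real.log (pBC (B ω, C ω))
              - Real.log (pT (T ω)) - Real.log (pC (C ω)) ≤ G (T ω) - 1 := by
            rw [hGT]; linarith
          calc (-(P.p ω * Real.logb 2 (pT (T ω))) + -(P.p ω * Real.logb 2 (pC (C ω))))
              - (-(P.p ω * Real.logb 2 (pAC (A ω, C ω))) + -(P.p ω * Real.logb 2 (pBC (B ω, C ω))))
              = (P.p ω * (Real.log (pAC (A ω, C ω)) + Real.log (pBC (B ω, C ω))
                  - Real.log (pT (T ω)) - Real.log (pC (C ω)))) / Real.log 2 := by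
                simp only [Real.logb]; ring
            _ ≤ (P.p ω * (G (T ω) - 1)) / Real.log 2 :=
                div_le_div_of_nonneg_right (mul_le_mul_of_nonneg_left hstep hp.le) hl2.le
            _ = (P.p ω * G (T ω) - P.p ω) / Real.log 2 := by ring
    _ = ((∑ ω, P.p ω * G (T ω)) - ∑ ω, P.p ω) / Real.log 2 := by
        rw [← Finset.sum_sub_distrib, ← Finset.sum_div]
    _ = ((∑ v, pT v * G v) - 1) / Real.log 2 := by rw [sum_p_mul, P.sum_one]
    _ ≤ 0 := div_nonpos_of_nonpos_of_nonneg (by linarith) hl2.le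

lemma condH_nonneg {α β : Type} [Fintype α] [DecidableEq α] [Fintype β] [DecidableEq β]
    (X : P.Ω → α) (Y : P.Ω → β) : 0 ≤ P.condH X Y :=
  sub_nonneg.2 (H_mono fun ω ω' h => (congrArg Prod.snd h : Y ω = Y ω'))

lemma condH_mono_pair {α β γ : Type} [Fintype α] [DecidableEq α] [Fintype β] [DecidableEq β]
    [Fintype γ] [DecidableEq γ] (X : P.Ω → α) (Y : P.Ω → β) (Z : P.Ω → γ) :
    P.condH X (fun ω => (Y ω, Z ω)) ≤ P.condH X Z := by
  have := submod (P := P) X Y Z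
  unfold condH
  linarith

lemma condH_eq_zero_of_det {α β : Type} [Fintype α] [DecidableEq α] [Fintype β] [DecidableEq β]
    {X : P.Ω → α} {Y : P.Ω → β} (h : ∀ ω ω', Y ω = Y ω' → X ω = X ω') :
    P.condH X Y = 0 := by
  unfold condH
  rw [H_congr (Y := Y) fun ω ω' => ?_, sub_self]
  constructor
  · exact fun hp => congrArg Prod.snd hp
  · exact fun hy => Prod.ext (h ω ω' hy) hy

lemma H_of_const {α : Type} [Fintype α] [DecidableEq α] {X : P.Ω → α}
    (h : ∀ ω ω', X ω = X ω') : P.H X = 0 := by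
  rw [H_eq]
  refine Finset.sum_eq_zero fun ω _ => ?_
  have : P.prob X (X ω) = 1 := by
    unfold prob
    rw [← P.sum_one]
    exact Finset.sum_congr rfl fun ω' _ => by rw [if_pos (h ω' ω)]
  simp [this]

lemma prob_comp_eq_sum {α β : Type} [Fintype α] [DecidableEq α] [DecidableEq β]
    (X : P.Ω → α) (f : α → β) (b : β) :
    P.prob (fun ω => f (X ω)) b
      = ∑ a ∈ Finset.univ.filter (fun a => f a = b), P.prob X a := by
  unfold prob
  rw [Finset.sum_comm]
  refine Finset.sum_congr rfl fun ω _ => ?_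
  rw [Finset.sum_filter]
  have : ∀ a : α, (if f a = b then if X ω = a then P.p ω else 0 else 0)
      = if X ω = a then (if f (X ω) = b then P.p ω else 0) else 0 := by
    intro a
    by_cases ha : X ω = a
    · subst ha; simp
    · simp [ha]
  simp_rw [this, Finset.sum_ite_eq]
  simp

lemma prob_restrict {ι V : Type} [Fintype ι] [DecidableEq ι] [Fintype V] [DecidableEq V]
    {W : ι → P.Ω → V} (hind : P.iIndep W) (T : Finset ι) (a : ι → V) :
    P.prob (P.tuple fun j : {x // x ∈ T} => W j.1) (fun j => a j.1)
      = ∏ i ∈ T, P.prob (W i) (a i) := by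
  have h1 : P.prob (P.tuple fun j : {x // x ∈ T} => W j.1) (fun j => a j.1)
      = P.prob (fun ω => (fun c : ι → V => fun j : {x // x ∈ T} => c j.1) ((P.tuple W) ω))
          ((fun c : ι → V => fun j : {x // x ∈ T} => c j.1) a) := rfl
  rw [h1, prob_comp_eq_sum (P := P) (P.tuple W) (fun c : ι → V => fun j : {x // x ∈ T} => c j.1)]
  have hset : Finset.univ.filter
        (fun c : ι → V => (fun j : {x // x ∈ T} => c j.1) = fun j : {x // x ∈ T} => a j.1)
      = Fintype.piFinset (fun i => if i ∈ T then {a i} else Finset.univ) := by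
    ext c
    simp only [Finset.mem_filter, Finset.mem_univ, true_and, Fintype.mem_piFinset,
      funext_iff, Subtype.forall]
    refine forall_congr' fun i => ?_
    by_cases hi : i ∈ T
    · simp [hi]
    · simp [hi]
  rw [hset]
  have : ∀ c ∈ Fintype.piFinset (fun i => if i ∈ T then ({a i} : Finset V) else Finset.univ),
      P.prob (P.tuple W) c = ∏ i, P.prob (W i) (c i) := fun c _ => hind c
  rw [Finset.sum_congr rfl this, ← Finset.prod_univ_sum]
  have : ∀ i : ι, (∑ v ∈ (if i ∈ T then ({a i} : Finset V) else Finset.univ), P.prob (W i) v)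
      = if i ∈ T then P.prob (W i) (a i) else 1 := by
    intro i
    by_cases hi : i ∈ T
    · simp [hi]
    · simp only [hi, if_false]
      exact sum_prob (W i)
  rw [Finset.prod_congr rfl fun i _ => this i, Finset.prod_ite_mem, Finset.univ_inter]

lemma H_tuple_insert {ι V : Type} [Fintype ι] [DecidableEq ι] [Fintype V] [DecidableEq V]
    {W : ι → P.Ω → V} (hind : P.iIndep W) {k' : ι} {T : Finset ι} (hk' : k' ∉ T) :
    P.H (P.tuple fun j : {x // x ∈ insert k' T} => W j.1)
      = P.H (W k') + P.H (P.tuple fun j : {x // x ∈ T} => W j.1) := by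
  rw [H_eq, H_eq, H_eq, ← Finset.sum_add_distrib]
  refine Finset.sum_congr rfl fun ω _ => ?_
  have e1 : P.prob (P.tuple fun j : {x // x ∈ insert k' T} => W j.1)
        ((P.tuple fun j : {x // x ∈ insert k' T} => W j.1) ω)
      = ∏ i ∈ insert k' T, P.prob (W i) (W i ω) :=
    prob_restrict hind (insert k' T) (fun i => W i ω)
  have e2 : P.prob (P.tuple fun j : {x // x ∈ T} => W j.1)
        ((P.tuple fun j : {x // x ∈ T} => W j.1) ω)
      = ∏ i ∈ T, P.prob (W i) (W i ω) :=
    prob_restrict hind T (fun i => W i ω)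
  rw [e1, e2, Finset.prod_insert hk']
  rcases eq_or_lt_of_le (P.nonneg ω) with hp | hp
  · simp [← hp]
  · have h1 : 0 < P.prob (W k') (W k' ω) := lt_of_lt_of_le hp (le_prob (W k') ω)
    have h2 : 0 < ∏ i ∈ T, P.prob (W i) (W i ω) := by
      rw [← e2]
      exact lt_of_lt_of_le hp (le_prob _ ω)
    rw [Real.logb_mul h1.ne' h2.ne']
    ring

lemma condH_mono_pair' {α β γ : Type} [Fintype α] [DecidableEq α] [Fintype β] [DecidableEq β]
    [Fintype γ] [DecidableEq γ] (X : P.Ω → α) (Y : P.Ω → β) (Z : P.Ω → γ) :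
    P.condH X (fun ω => (Y ω, Z ω)) ≤ P.condH X Y := by
  have h := condH_mono_pair (P := P) X Z Y
  have e1 : P.H (fun ω => (X ω, (Y ω, Z ω))) = P.H (fun ω => (X ω, (Z ω, Y ω))) :=
    H_congr fun ω ω' => by simp only [Prod.ext_iff]; tauto
  have e2 : P.H (fun ω => (Y ω, Z ω)) = P.H (fun ω => (Z ω, Y ω)) :=
    H_congr fun ω ω' => by simp only [Prod.ext_iff]; tauto
  unfold condH at *
  linarith

lemma tuple_insert_iff {ι V : Type} [DecidableEq ι] (W : ι → P.Ω → V) (k' : ι) (T : Finset ι)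
    (ω ω' : P.Ω) :
    (P.tuple fun j : {x // x ∈ insert k' T} => W j.1) ω
        = (P.tuple fun j : {x // x ∈ insert k' T} => W j.1) ω'
      ↔ (W k' ω = W k' ω' ∧ (P.tuple fun j : {x // x ∈ T} => W j.1) ω
          = (P.tuple fun j : {x // x ∈ T} => W j.1) ω') := by
  unfold tuple
  constructor
  · intro h
    exact ⟨congrFun h ⟨k', Finset.mem_insert_self k' T⟩,
      funext fun j => congrFun h ⟨j.1, Finset.mem_insert_of_mem j.2⟩⟩
  · rintro ⟨h0, h2⟩
    funext j
    show W j.1 ω = W j.1 ω'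
    rcases Finset.mem_insert.1 j.2 with h | h
    · rw [h]; exact h0
    · exact congrFun h2 ⟨j.1, h⟩

lemma tuple_empty_eq {ι V : Type} [DecidableEq ι] (W : ι → P.Ω → V) (ω ω' : P.Ω) :
    (P.tuple fun j : {x // x ∈ (∅ : Finset ι)} => W j.1) ω
      = (P.tuple fun j : {x // x ∈ (∅ : Finset ι)} => W j.1) ω' :=
  funext fun j => absurd j.2 (Finset.notMem_empty _)

end FinProbSpace

open FinProbSpace

/-- A locally decodable code with `K` source symbols of entropy `Lw`, `M` coded symbols of
entropy `Lx`, and locality `N`. -/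
structure LDC (K N M : ℕ) (Lw Lx : ℝ) where
  P : FinProbSpace
  V : Type
  [fV : Fintype V]
  [dV : DecidableEq V]
  V' : Type
  [fV' : Fintype V']
  [dV' : DecidableEq V']
  /-- the source symbols -/
  W : Fin K → P.Ω → V
  /-- the coded symbols -/
  X : Fin M → P.Ω → V'
  indep : P.iIndep W
  HW : ∀ k, P.H (W k) = Lw
  coded_fn : ∀ m, ∃ f : (Fin K → V) → V', ∀ ω, X m ω = f (fun k => W k ω)
  HX : ∀ m, P.H (X m) = Lx
  /-- the decoding supersets -/
  decSets : Fin K → Finset (Finset (Fin M))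
  decSets_nonempty : ∀ k, (decSets k).Nonempty
  decSets_card : ∀ k, ∀ s ∈ decSets k, s.card = N
  decodes : ∀ k, ∀ s ∈ decSets k,
    P.condH (W k) (P.tuple fun i : {x // x ∈ s} => X i.1) = 0

attribute [instance] LDC.fV LDC.dV LDC.fV' LDC.dV'

/-- A universal LDC: every coded symbol appears in some decoding set of every source symbol. -/
def LDC.IsUniversal {K N M : ℕ} {Lw Lx : ℝ} (C : LDC K N M Lw Lx) : Prop :=
  ∀ (m : Fin M) (k : Fin K), ∃ s ∈ C.decSets k, m ∈ s

/-- A perfectly smooth LDC: for each source symbol, every coded symbol lies in the same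
number of decoding sets. -/
def LDC.IsSmooth {K N M : ℕ} {Lw Lx : ℝ} (C : LDC K N M Lw Lx) : Prop :=
  ∀ (k : Fin K) (m m' : Fin M),
    ((C.decSets k).filter (fun s => m ∈ s)).card =
      ((C.decSets k).filter (fun s => m' ∈ s)).card

/-- `C*(N, K) = N (1 + 1/N + ⋯ + 1/N^{K-1})⁻¹`. -/
def Cstar (N K : ℕ) : ℝ := N / (∑ j ∈ Finset.range K, (1 / (N : ℝ)) ^ j)

/-- An `N`-query information retrieval scheme with `K` messages of entropy `Lw` and
answer sets of sizes `Mn n` with answers of entropy `Lx`. -/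
structure IRScheme (K N : ℕ) (Mn : Fin N → ℕ) (Lw Lx : ℝ) where
  P : FinProbSpace
  V : Type
  [fV : Fintype V]
  [dV : DecidableEq V]
  V' : Type
  [fV' : Fintype V']
  [dV' : DecidableEq V']
  /-- the messages -/
  W : Fin K → P.Ω → V
  /-- `A n m` is the `m`-th possible answer of database `n` -/
  A : (n : Fin N) → Fin (Mn n) → P.Ω → V'
  indep : P.iIndep W
  HW : ∀ k, P.H (W k) = Lw
  ans_fn : ∀ n m, ∃ f : (Fin K → V) → V', ∀ ω, A n m ω = f (fun k => W k ω)
  HA : ∀ n m, P.H (A n m) = Lx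
  /-- the decoding supersets: each decoding set consists of one answer index per database -/
  Q : Fin K → Finset ((n : Fin N) → Fin (Mn n))
  Q_nonempty : ∀ k, (Q k).Nonempty
  decodes : ∀ k, ∀ q ∈ Q k, P.condH (W k) (P.tuple fun n => A n (q n)) = 0

attribute [instance] IRScheme.fV IRScheme.dV IRScheme.fV' IRScheme.dV'

/-- A repudiative (RIR_max) scheme: every possible answer of every database appears in some
decoding set of every message. -/
def IRScheme.IsRIR {K N : ℕ} {Mn : Fin N → ℕ} {Lw Lx : ℝ} (C : IRScheme K N Mn Lw Lx) : Prop :=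
  ∀ (n : Fin N) (m : Fin (Mn n)) (k : Fin K), ∃ q ∈ C.Q k, q n = m

/-- A perfectly private (PIR_max) scheme: for each message there is a distribution on its
decoding sets such that the marginal distribution of the query to each database does not
depend on the message. -/
def IRScheme.IsPIR {K N : ℕ} {Mn : Fin N → ℕ} {Lw Lx : ℝ} (C : IRScheme K N Mn Lw Lx) : Prop :=
  ∃ μ : Fin K → ((n : Fin N) → Fin (Mn n)) → ℝ,
    (∀ k q, 0 ≤ μ k q) ∧ (∀ k, ∑ q ∈ C.Q k, μ k q = 1) ∧
    (∀ (k k' : Fin K) (n : Fin N) (m : Fin (Mn n)),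
      ∑ q ∈ (C.Q k).filter (fun q => q n = m), μ k q =
        ∑ q ∈ (C.Q k').filter (fun q => q n = m), μ k' q)

/-- `C_K(N) = (1 + 1/N + ⋯ + 1/N^{K-1})⁻¹`, the capacity of PIR. -/
def CK (N K : ℕ) : ℝ := (∑ j ∈ Finset.range K, (1 / (N : ℝ)) ^ j)⁻¹

/-- Incompatibility of same and distinct information, Lemma 3,
Property 3: in a capacity achieving ULDC, no pair of coded symbols can simultaneously
contain the same information and distinct information about a source symbol `W_k`. -/
theorem uldc_incompatibility (K N M : ℕ) (hK : 1 ≤ K) (hN : 2 ≤ N) (Lw Lx : ℝ)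
    (hLw : 0 < Lw) (C : LDC K N M Lw Lx) (hU : C.IsUniversal)
    (hcap : Lw / Lx = Cstar N K) :
    ¬ ∃ (i₁ i₂ : Fin M) (k : Fin K),
      C.P.sameInfo (C.X i₁) (C.X i₂)
        (C.P.tuple fun j : {x // x ∈ ({k}ᶜ : Finset (Fin K))} => C.W j.1) ∧
      C.P.condH (C.X i₁)
        (fun ω => (C.X i₂ ω,
          (C.P.tuple fun j : {x // x ∈ ({k}ᶜ : Finset (Fin K))} => C.W j.1) ω)) =
      C.P.condH (C.X i₁)
        (C.P.tuple fun j : {x // x ∈ ({k}ᶜ : Finset (Fin K))} => C.W j.1) := by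
  rintro ⟨i₁, i₂, k, hsame, hdist⟩
  have hNR : (1:ℝ) < (N:ℝ) := by exact_mod_cast lt_of_lt_of_le one_lt_two (by exact_mod_cast hN)
  have hN0 : (0:ℝ) < (N:ℝ) := lt_trans one_pos hNR
  have hN1 : (0:ℝ) < (N:ℝ) - 1 := by linarith
  set P := C.P with hP
  set WT : (T : Finset (Fin K)) → P.Ω → ({x // x ∈ T} → C.V) :=
    fun T => P.tuple fun j : {x // x ∈ T} => C.W j.1 with hWT
  set XS : (s : Finset (Fin M)) → P.Ω → ({x // x ∈ s} → C.V') :=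
    fun s => P.tuple fun i : {x // x ∈ s} => C.X i.1 with hXS
  set cH : Fin M → Finset (Fin K) → ℝ := fun i T => P.condH (C.X i) (WT T) with hcH
  have hM : (Finset.univ : Finset (Fin M)).Nonempty := ⟨i₁, Finset.mem_univ i₁⟩
  set B : Finset (Fin K) → ℝ := fun T => Finset.univ.sup' hM (fun i => cH i T) with hB
  have hcB : ∀ (i : Fin M) (T : Finset (Fin K)), cH i T ≤ B T :=
    fun i T => Finset.le_sup' (f := fun i => cH i T) (Finset.mem_univ i)
  have hc0 : cH i₁ ({k}ᶜ : Finset (Fin K)) = 0 := by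
    rw [hcH]; dsimp only; rw [hWT]; dsimp only; rw [← hdist]; exact hsame.1
  -- (a) subadditivity
  have subadd : ∀ (T : Finset (Fin K)) (s : Finset (Fin M)),
      P.H (fun ω => (XS s ω, WT T ω)) - P.H (WT T) ≤ ∑ j ∈ s, cH j T := by
    intro T s
    induction s using Finset.induction with
    | empty =>
        have e : P.H (fun ω => (XS ∅ ω, WT T ω)) = P.H (WT T) := by
          refine H_congr fun ω ω' => ?_
          rw [Prod.ext_iff]
          exact ⟨fun h => h.2, fun h => ⟨tuple_empty_eq _ ω ω', h⟩⟩
        simp [e]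
    | @insert j s' hj ih =>
        have e : P.H (fun ω => (XS (insert j s') ω, WT T ω))
            = P.H (fun ω => (C.X j ω, (XS s' ω, WT T ω))) := by
          refine H_congr fun ω ω' => ?_
          simp only [Prod.ext_iff, hXS]
          rw [tuple_insert_iff]
          tauto
        have hsm := submod (P := P) (C.X j) (XS s') (WT T)
        rw [Finset.sum_insert hj]
        have : cH j T = P.H (fun ω => (C.X j ω, WT T ω)) - P.H (WT T) := rfl
        rw [this, e]
        linarith
  -- (b) decoding a fresh symbol is free
  have hdec : ∀ (T : Finset (Fin K)) (k' : Fin K), ∀ s ∈ C.decSets k',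
      P.H (fun ω => (XS s ω, WT (insert k' T) ω)) = P.H (fun ω => (XS s ω, WT T ω)) := by
    intro T k' s hs
    have hd : P.condH (C.W k') (XS s) = 0 := C.decodes k' s hs
    have h1 : P.condH (C.W k') (fun ω => (XS s ω, WT T ω)) = 0 := by
      refine le_antisymm ?_ (condH_nonneg _ _)
      rw [← hd]
      exact condH_mono_pair' _ _ _
    have h2 : P.H (fun ω => (XS s ω, WT (insert k' T) ω))
        = P.H (fun ω => (C.W k' ω, (XS s ω, WT T ω))) := by
      refine H_congr fun ω ω' => ?_
      simp only [Prod.ext_iff, hWT]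
      rw [tuple_insert_iff]
      tauto
    have h1' : P.H (fun ω => (C.W k' ω, (XS s ω, WT T ω)))
        - P.H (fun ω => (XS s ω, WT T ω)) = 0 := h1
    linarith
  -- (c) monotonicity
  have hmono : ∀ (T' : Finset (Fin K)) (s : Finset (Fin M)) (i : Fin M), i ∈ s →
      P.H (fun ω => (C.X i ω, WT T' ω)) ≤ P.H (fun ω => (XS s ω, WT T' ω)) := by
    intro T' s i his
    refine H_mono fun ω ω' h => ?_
    rw [Prod.ext_iff] at h ⊢
    exact ⟨congrFun h.1 ⟨i, his⟩, h.2⟩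
  -- (d) entropy of the W-tuple grows by Lw
  have hWins : ∀ (T : Finset (Fin K)) (k' : Fin K), k' ∉ T →
      P.H (WT (insert k' T)) = Lw + P.H (WT T) := by
    intro T k' hk'
    have := H_tuple_insert (P := P) C.indep (k' := k') (T := T) hk'
    rw [hWT]
    dsimp only
    rw [this, C.HW k']
  -- lower bound on a decoding-set entropy
  have hlow : ∀ (T : Finset (Fin K)) (k' : Fin K), k' ∉ T → ∀ s ∈ C.decSets k',
      Lw + P.H (WT T) ≤ P.H (fun ω => (XS s ω, WT T ω)) := by
    intro T k' hk' s hs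
    have h1 : P.H (WT (insert k' T)) ≤ P.H (fun ω => (XS s ω, WT (insert k' T) ω)) := by
      refine H_mono fun ω ω' h => ?_
      exact (Prod.ext_iff.1 h).2
    rw [hdec T k' s hs, hWins T k' hk'] at h1
    exact h1
  -- the recursion step
  have step : ∀ (T : Finset (Fin K)) (k' : Fin K), k' ∉ T → ∀ i : Fin M,
      Lw + cH i (insert k' T) ≤ N * B T := by
    intro T k' hk' i
    obtain ⟨s, hs, his⟩ := hU i k'
    have ha := subadd T s
    have hb := hdec T k' s hs
    have hc := hmono (insert k' T) s i his
    have hd := hWins T k' hk'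
    have he : ∑ j ∈ s, cH j T ≤ N * B T := by
      have := Finset.sum_le_card_nsmul s (fun j => cH j T) (B T) (fun j _ => hcB j T)
      rw [C.decSets_card k' s hs] at this
      rw [nsmul_eq_mul] at this
      exact this
    have hci : cH i (insert k' T)
        = P.H (fun ω => (C.X i ω, WT (insert k' T) ω)) - P.H (WT (insert k' T)) := rfl
    rw [hci, hd]
    linarith
  -- the strengthened base case at T = {k}ᶜ
  have base : Lw ≤ ((N:ℝ) - 1) * B ({k}ᶜ : Finset (Fin K)) := by
    obtain ⟨s, hs, his⟩ := hU i₁ k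
    have hknot : k ∉ ({k}ᶜ : Finset (Fin K)) := by simp
    have ha := subadd ({k}ᶜ : Finset (Fin K)) s
    have hl := hlow ({k}ᶜ : Finset (Fin K)) k hknot s hs
    have hsplit : ∑ j ∈ s, cH j ({k}ᶜ : Finset (Fin K))
        = ∑ j ∈ s.erase i₁, cH j ({k}ᶜ : Finset (Fin K)) := by
      rw [← Finset.add_sum_erase s _ his, hc0, zero_add]
    have he : ∑ j ∈ s.erase i₁, cH j ({k}ᶜ : Finset (Fin K))
        ≤ ((N:ℝ) - 1) * B ({k}ᶜ : Finset (Fin K)) := by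
      have := Finset.sum_le_card_nsmul (s.erase i₁) (fun j => cH j ({k}ᶜ : Finset (Fin K)))
        (B ({k}ᶜ : Finset (Fin K))) (fun j _ => hcB j _)
      rw [Finset.card_erase_of_mem his, C.decSets_card k s hs, nsmul_eq_mul] at this
      have hcast : ((N - 1 : ℕ) : ℝ) = (N:ℝ) - 1 := by
        have : (1:ℕ) ≤ N := le_trans one_le_two hN
        push_cast [this]
        ring
      rw [hcast] at this
      exact this
    linarith
  -- the recursion
  have main : ∀ n : ℕ, ∀ T : Finset (Fin K), T ⊆ ({k}ᶜ : Finset (Fin K)) →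
      (({k}ᶜ : Finset (Fin K)) \ T).card = n →
      Lw * (∑ j ∈ Finset.range n, ((1:ℝ)/N)^(j+1)) + (Lw/((N:ℝ)-1)) * ((1:ℝ)/N)^n ≤ B T := by
    intro n
    induction n with
    | zero =>
        intro T hsub hcard
        have hT : T = ({k}ᶜ : Finset (Fin K)) := by
          have := Finset.card_eq_zero.1 hcard
          have h2 := Finset.sdiff_eq_empty_iff_subset.1 this
          exact Finset.Subset.antisymm hsub h2
        subst hT
        simp only [Finset.range_zero, Finset.sum_empty, mul_zero, zero_add, pow_zero, mul_one]
        rw [div_le_iff₀ hN1]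
        linarith [base]
    | succ n ih =>
        intro T hsub hcard
        have hne : (({k}ᶜ : Finset (Fin K)) \ T).Nonempty := by
          rw [← Finset.card_pos, hcard]; exact Nat.succ_pos n
        obtain ⟨k', hk'⟩ := hne
        have hk'c : k' ∈ ({k}ᶜ : Finset (Fin K)) := (Finset.mem_sdiff.1 hk').1
        have hk'T : k' ∉ T := (Finset.mem_sdiff.1 hk').2
        have hsub' : insert k' T ⊆ ({k}ᶜ : Finset (Fin K)) := Finset.insert_subset hk'c hsub
        have hcard' : (({k}ᶜ : Finset (Fin K)) \ insert k' T).card = n := by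
          rw [Finset.sdiff_insert, Finset.card_erase_of_mem hk', hcard]
          omega
        have hih := ih (insert k' T) hsub' hcard'
        obtain ⟨i', _, hi'⟩ := Finset.exists_mem_eq_sup' hM (fun i => cH i (insert k' T))
        have hstep := step T k' hk'T i'
        have hBT' : B (insert k' T) = cH i' (insert k' T) := hi'
        have hBlow : (Lw + B (insert k' T)) / N ≤ B T := by
          rw [div_le_iff₀ hN0]
          rw [hBT']
          linarith [hstep, mul_comm (B T) (N:ℝ)]
        refine le_trans ?_ hBlow
        have hsum : ∑ j ∈ Finset.range (n+1), ((1:ℝ)/N)^(j+1)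
            = (1/N) * (∑ j ∈ Finset.range n, ((1:ℝ)/N)^(j+1)) + 1/N := by
          rw [Finset.sum_range_succ', Finset.mul_sum]
          congr 1
          · exact Finset.sum_congr rfl fun j _ => by ring
          · exact pow_one _
        rw [hsum]
        have key : Lw * ((1/N) * (∑ j ∈ Finset.range n, ((1:ℝ)/N)^(j+1)) + 1/N)
            + (Lw/((N:ℝ)-1)) * ((1:ℝ)/N)^(n+1)
            = (Lw + (Lw * (∑ j ∈ Finset.range n, ((1:ℝ)/N)^(j+1))
              + (Lw/((N:ℝ)-1)) * ((1:ℝ)/N)^n)) / N := by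
          rw [pow_succ]
          field_simp
          ring
        rw [key]
        exact div_le_div_of_nonneg_right (by linarith [hih]) hN0.le
  -- evaluate at T = ∅
  have hBempty : B (∅ : Finset (Fin K)) = Lx := by
    have hc : ∀ i : Fin M, cH i (∅ : Finset (Fin K)) = Lx := by
      intro i
      have h1 : P.H (WT (∅ : Finset (Fin K))) = 0 :=
        H_of_const fun ω ω' => tuple_empty_eq _ ω ω'
      have h2 : P.H (fun ω => (C.X i ω, WT (∅ : Finset (Fin K)) ω)) = P.H (C.X i) := by
        refine H_congr fun ω ω' => ?_
        rw [Prod.ext_iff]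
        exact ⟨fun h => h.1, fun h => ⟨h, tuple_empty_eq _ ω ω'⟩⟩
      have : cH i (∅ : Finset (Fin K))
          = P.H (fun ω => (C.X i ω, WT (∅ : Finset (Fin K)) ω))
            - P.H (WT (∅ : Finset (Fin K))) := rfl
      rw [this, h1, h2, C.HX i, sub_zero]
    rw [hB]
    dsimp only
    rw [Finset.sup'_congr hM rfl fun i _ => hc i]
    exact Finset.sup'_const hM Lx
  have hcardc : (({k}ᶜ : Finset (Fin K)) \ ∅).card = K - 1 := by
    rw [Finset.sdiff_empty, Finset.card_compl, Finset.card_singleton, Fintype.card_fin]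
  have hfinal := main (K-1) ∅ (Finset.empty_subset _) hcardc
  rw [hBempty] at hfinal
  -- now derive the numeric contradiction
  set q : ℝ := 1/(N:ℝ) with hq
  have hq0 : 0 < q := by rw [hq]; positivity
  have hS : (0:ℝ) ≤ ∑ j ∈ Finset.range (K-1), q^(j+1) :=
    Finset.sum_nonneg fun j _ => by positivity
  have hLx : 0 < Lx := by
    have : 0 < (Lw/((N:ℝ)-1)) * q^(K-1) := by positivity
    nlinarith [hfinal, hS]
  have hσ : (0:ℝ) < ∑ j ∈ Finset.range K, q^j := by
    refine Finset.sum_pos (fun j _ => by positivity) ?_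
    exact ⟨0, Finset.mem_range.2 (lt_of_lt_of_le Nat.zero_lt_one hK)⟩
  have hcross : Lw * (∑ j ∈ Finset.range K, q^j) = N * Lx := by
    rw [Cstar] at hcap
    rw [div_eq_div_iff (ne_of_gt hLx) (ne_of_gt hσ)] at hcap
    linarith [hcap]
  have hKsplit : ∑ j ∈ Finset.range K, q^j = (∑ j ∈ Finset.range (K-1), q^j) + q^(K-1) := by
    have h := Finset.sum_range_succ (fun j => q^j) (K-1)
    rw [Nat.sub_add_cancel hK] at h
    exact h
  have hNS : (N:ℝ) * (∑ j ∈ Finset.range (K-1), q^(j+1)) = ∑ j ∈ Finset.range (K-1), q^j := by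
    rw [Finset.mul_sum]
    refine Finset.sum_congr rfl fun j _ => ?_
    rw [hq, pow_succ]
    field_simp
  -- multiply hfinal by N
  have hmul : (N:ℝ) * (Lw * (∑ j ∈ Finset.range (K-1), q^(j+1)) + (Lw/((N:ℝ)-1)) * q^(K-1))
      ≤ N * Lx := mul_le_mul_of_nonneg_left hfinal hN0.le
  rw [← hcross, hKsplit] at hmul
  have hexp : (N:ℝ) * (Lw * (∑ j ∈ Finset.range (K-1), q^(j+1)) + (Lw/((N:ℝ)-1)) * q^(K-1))
      = Lw * (∑ j ∈ Finset.range (K-1), q^j) + (N:ℝ)/((N:ℝ)-1) * Lw * q^(K-1) := by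
    rw [mul_add, ← mul_assoc, mul_comm (N:ℝ) Lw, mul_assoc, hNS]
    ring
  rw [hexp] at hmul
  have hqK : 0 < q^(K-1) := by positivity
  have hfrac : (1:ℝ) < (N:ℝ)/((N:ℝ)-1) := by
    rw [lt_div_iff₀ hN1]
    linarith
  have hLq : 0 < Lw * q^(K-1) := mul_pos hLw hqK
  nlinarith [hmul, mul_lt_mul_of_pos_right hfrac hLq]
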